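/- arXiv:1302.0673 — 2 statements merged into one kernel-verified Lean document; each statement's English description precedes it below -/
import Mathlib

section
/- Let (λ_i)_{i≥1} be a nondecreasing sequence of positive reals and, for a fixed index sequence (i_p)_{p≥1} of natural numbers, consider for each r ≥ 2 and each choice c₁,...,c_{r-1} ∈ {0,1}, c_r = 1, c_{r+1} = 0 the quantity Q(c) := ∑_{p=1}^r λ_{i_p} 2^{p-1} (c_p 2^{-p} + (-1)^{c_p} ∑_{q=p+1}^{r+1} 2^{-q} c_q)². Then sup over all such r and choices (c₁,...,c_r) of Q(c) is finite if and only if ∑_{p=1}^∞ λ_{i_p}/2^p < ∞. -/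
open Finset

private lemma pow2_pos' (q : ℕ) : (0:ℝ) < 2 ^ q := by positivity

private lemma geom_aux (p : ℕ) : ∀ m, p ≤ m →
    ∑ q ∈ Icc (p+1) m, ((2:ℝ)^q)⁻¹ + ((2:ℝ)^m)⁻¹ ≤ ((2:ℝ)^p)⁻¹ := by
  intro m
  induction m with
  | zero =>
      intro hm
      obtain rfl : p = 0 := Nat.le_zero.mp hm
      simp
  | succ n ih =>
      intro hm
      rcases Nat.lt_or_ge p (n+1) with h' | h'
      · have hpn : p ≤ n := by omega
        rw [Finset.sum_Icc_succ_top (by omega : p + 1 ≤ n + 1)]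
        have hdb : ((2:ℝ)^(n+1))⁻¹ + ((2:ℝ)^(n+1))⁻¹ = ((2:ℝ)^n)⁻¹ := by
          rw [pow_succ]
          field_simp
          ring
        have := ih hpn
        linarith
      · obtain rfl : p = n+1 := by omega
        rw [Finset.Icc_eq_empty (by omega)]
        simp

private lemma tail_nonneg' (a b : ℕ) (c : ℕ → ℕ) :
    0 ≤ ∑ q ∈ Icc a b, ((2:ℝ)^q)⁻¹ * (c q : ℝ) := by
  apply Finset.sum_nonneg
  intro q _
  positivity

private lemma tail_le' (p m : ℕ) (c : ℕ → ℕ) (hc : ∀ q, c q ≤ 1) :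
    ∑ q ∈ Icc (p+1) m, ((2:ℝ)^q)⁻¹ * (c q : ℝ) ≤ ((2:ℝ)^p)⁻¹ := by
  have h1 : ∑ q ∈ Icc (p+1) m, ((2:ℝ)^q)⁻¹ * (c q : ℝ)
      ≤ ∑ q ∈ Icc (p+1) m, ((2:ℝ)^q)⁻¹ := by
    apply Finset.sum_le_sum
    intro q _
    have hq : (c q : ℝ) ≤ 1 := by exact_mod_cast hc q
    have := inv_pos.mpr (pow2_pos' q)
    nlinarith
  rcases le_or_gt (p+1) m with hm | hm
  · have h2 := geom_aux p m (by omega)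
    have := inv_pos.mpr (pow2_pos' m)
    linarith
  · rw [Finset.Icc_eq_empty (by omega)] at h1
    simp only [Finset.sum_empty] at h1
    have := inv_pos.mpr (pow2_pos' p)
    rw [Finset.Icc_eq_empty (by omega), Finset.sum_empty]
    linarith

private lemma sum_Icc_drop_bot {f : ℕ → ℝ} {a b : ℕ} (h : f a = 0) :
    ∑ q ∈ Icc a b, f q = ∑ q ∈ Icc (a+1) b, f q := by
  rcases le_or_gt a b with hab | hab
  · rw [← Finset.Ioc_insert_left hab, Finset.sum_insert (by simp), h, zero_add,
      ← Finset.Icc_add_one_left_eq_Ioc]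
  · rw [Finset.Icc_eq_empty (by omega), Finset.Icc_eq_empty (by omega)]

private lemma sum_Icc_one (g : ℕ → ℝ) (m : ℕ) :
    ∑ p ∈ Icc 1 m, g p = ∑ k ∈ range m, g (k+1) := by
  rw [← Finset.Ico_add_one_right_eq_Icc, Finset.sum_Ico_eq_sum_range]
  exact Finset.sum_congr (by simp) (fun k _ => by rw [Nat.add_comm 1 k])

private lemma T_bounds (p m : ℕ) (c : ℕ → ℕ) (hc : ∀ q, c q ≤ 1) :
    0 ≤ (c p : ℝ) * ((2:ℝ)^p)⁻¹ +
        (-1:ℝ)^(c p) * ∑ q ∈ Icc (p+1) m, ((2:ℝ)^q)⁻¹ * (c q : ℝ) ∧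
    (c p : ℝ) * ((2:ℝ)^p)⁻¹ +
        (-1:ℝ)^(c p) * ∑ q ∈ Icc (p+1) m, ((2:ℝ)^q)⁻¹ * (c q : ℝ) ≤ ((2:ℝ)^p)⁻¹ := by
  have h0 := tail_nonneg' (p+1) m c
  have h1 := tail_le' p m c hc
  rcases Nat.le_one_iff_eq_zero_or_eq_one.mp (hc p) with h | h <;> rw [h]
  · simp only [Nat.cast_zero, zero_mul, pow_zero, one_mul, zero_add]
    exact ⟨h0, h1⟩
  · simp only [Nat.cast_one, one_mul, pow_one, neg_one_mul]
    constructor <;> linarith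

/-- Lemma 2(b): for a nondecreasing sequence `λ` of positive reals and an index
sequence `i`, the quantity
`Q(c) = ∑_{p=1}^r λ_{i_p} 2^{p-1} (c_p 2^{-p} + (-1)^{c_p} ∑_{q=p+1}^{r+1} 2^{-q} c_q)²`
is bounded uniformly over all `r ≥ 2` and binary digits `c₁,…,c_{r-1} ∈ {0,1}`,
`c_r = 1`, `c_{r+1} = 0`, if and only if `∑_{p=1}^∞ λ_{i_p}/2^p < ∞`. -/
theorem bounded_Q_iff_summable (l : ℕ → ℝ) (hpos : ∀ n, 0 < l n)
    (hmono : Monotone l) (i : ℕ → ℕ) :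
    (∃ C : ℝ, ∀ (r : ℕ) (c : ℕ → ℕ), 2 ≤ r → (∀ p, c p ≤ 1) → c r = 1 →
        c (r + 1) = 0 →
        (∑ p ∈ Finset.Icc 1 r, l (i p) * 2 ^ (p - 1) *
          ((c p : ℝ) * (2 : ℝ) ^ (-(p : ℤ)) +
            (-1 : ℝ) ^ (c p) *
              ∑ q ∈ Finset.Icc (p + 1) (r + 1), (2 : ℝ) ^ (-(q : ℤ)) * (c q : ℝ)) ^ 2)
          ≤ C) ↔
      Summable (fun p : ℕ => l (i (p + 1)) / 2 ^ (p + 1)) := by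
  have hz : ∀ q : ℕ, (2:ℝ) ^ (-(q:ℤ)) = ((2:ℝ)^q)⁻¹ := fun q => by
    rw [zpow_neg, zpow_natCast]
  have hf0 : ∀ n : ℕ, 0 ≤ l (i (n+1)) / 2^(n+1) := fun n =>
    div_nonneg (hpos _).le (by positivity)
  constructor
  · rintro ⟨C, hC⟩
    apply summable_of_sum_range_le hf0 (c := 8 * C)
    intro n
    have hc1 : ∀ p : ℕ, p % 2 ≤ 1 := fun p => by omega
    have key := hC (2*n+3) (fun q => q % 2) (by omega) hc1
      (by show (2*n+3) % 2 = 1; omega) (by show (2*n+3+1) % 2 = 0; omega)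
    simp only [hz] at key
    have hterm : ∀ p ∈ Icc 1 (2*n+3), l (i p) / 2^p ≤
        8 * (l (i p) * 2 ^ (p - 1) *
          (((p % 2 : ℕ) : ℝ) * ((2:ℝ)^p)⁻¹ + (-1:ℝ)^(p % 2) *
            ∑ q ∈ Icc (p+1) (2*n+3+1), ((2:ℝ)^q)⁻¹ * ((q % 2 : ℕ) : ℝ)) ^ 2) := by
      intro p hp
      rw [Finset.mem_Icc] at hp
      obtain ⟨k, rfl⟩ : ∃ k, p = k + 1 := ⟨p - 1, by omega⟩
      set S : ℝ := ∑ q ∈ Icc (k+1+1) (2*n+3+1), ((2:ℝ)^q)⁻¹ * ((q % 2 : ℕ) : ℝ) with hS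
      have hT : ((2:ℝ)^(k+2))⁻¹ ≤
          (((k+1) % 2 : ℕ) : ℝ) * ((2:ℝ)^(k+1))⁻¹ + (-1:ℝ)^((k+1) % 2) * S := by
        rcases Nat.mod_two_eq_zero_or_one (k+1) with hk | hk
        · rw [hk]
          simp only [Nat.cast_zero, zero_mul, pow_zero, one_mul, zero_add]
          have hmem : k+2 ∈ Icc (k+1+1) (2*n+3+1) := by
            rw [Finset.mem_Icc]; omega
          have := Finset.single_le_sum
            (f := fun q => ((2:ℝ)^q)⁻¹ * ((q % 2 : ℕ) : ℝ))
            (fun q _ => by positivity) hmem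
          have hk2 : (k+2) % 2 = 1 := by omega
          simpa [hk2] using this
        · rw [hk]
          simp only [Nat.cast_one, one_mul, pow_one, neg_one_mul]
          have hdrop : S = ∑ q ∈ Icc (k+2+1) (2*n+3+1), ((2:ℝ)^q)⁻¹ * ((q % 2 : ℕ) : ℝ) := by
            rw [hS]
            apply sum_Icc_drop_bot
            have : (k+2) % 2 = 0 := by omega
            simp [this]
          have hle : S ≤ ((2:ℝ)^(k+2))⁻¹ := by
            rw [hdrop]
            exact tail_le' (k+2) (2*n+3+1) (fun q => q % 2) hc1
          have hdb : ((2:ℝ)^(k+1))⁻¹ = 2 * ((2:ℝ)^(k+2))⁻¹ := by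
            field_simp
            ring
          linarith
      have hT0 : (0:ℝ) ≤ ((2:ℝ)^(k+2))⁻¹ := by positivity
      have hT2 : (((2:ℝ)^(k+2))⁻¹)^2 ≤
          ((((k+1) % 2 : ℕ) : ℝ) * ((2:ℝ)^(k+1))⁻¹ + (-1:ℝ)^((k+1) % 2) * S) ^ 2 :=
        pow_le_pow_left₀ hT0 hT 2
      have heq : l (i (k+1)) / 2^(k+1) =
          8 * (l (i (k+1)) * 2 ^ (k+1-1) * (((2:ℝ)^(k+2))⁻¹)^2) := by
        simp only [Nat.add_sub_cancel]
        field_simp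
        ring
      rw [heq]
      gcongr
      exact mul_nonneg (hpos _).le (by positivity)
  -- note: need 0 ≤ l * 2^(k) for gcongr, handled
    calc ∑ k ∈ range n, l (i (k+1)) / 2^(k+1)
        ≤ ∑ k ∈ range (2*n+3), l (i (k+1)) / 2^(k+1) :=
          Finset.sum_le_sum_of_subset_of_nonneg
            (Finset.range_subset_range.mpr (by omega)) (fun k _ _ => hf0 k)
      _ = ∑ p ∈ Icc 1 (2*n+3), l (i p) / 2^p :=
          (sum_Icc_one (fun p => l (i p) / 2^p) (2*n+3)).symm
      _ ≤ ∑ p ∈ Icc 1 (2*n+3), 8 * (l (i p) * 2 ^ (p - 1) *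
            (((p % 2 : ℕ) : ℝ) * ((2:ℝ)^p)⁻¹ + (-1:ℝ)^(p % 2) *
              ∑ q ∈ Icc (p+1) (2*n+3+1), ((2:ℝ)^q)⁻¹ * ((q % 2 : ℕ) : ℝ)) ^ 2) :=
          Finset.sum_le_sum hterm
      _ = 8 * ∑ p ∈ Icc 1 (2*n+3), (l (i p) * 2 ^ (p - 1) *
            (((p % 2 : ℕ) : ℝ) * ((2:ℝ)^p)⁻¹ + (-1:ℝ)^(p % 2) *
              ∑ q ∈ Icc (p+1) (2*n+3+1), ((2:ℝ)^q)⁻¹ * ((q % 2 : ℕ) : ℝ)) ^ 2) := by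
          rw [Finset.mul_sum]
      _ ≤ 8 * C := by linarith [key]
  · intro hsum
    refine ⟨∑' k, l (i (k+1)) / 2^(k+1), ?_⟩
    intro r c hr hc hcr hcr1
    simp only [hz]
    have hterm : ∀ p ∈ Icc 1 r, l (i p) * 2 ^ (p - 1) *
        ((c p : ℝ) * ((2:ℝ)^p)⁻¹ + (-1:ℝ)^(c p) *
          ∑ q ∈ Icc (p+1) (r+1), ((2:ℝ)^q)⁻¹ * (c q : ℝ)) ^ 2 ≤
        l (i p) / 2^p := by
      intro p hp
      rw [Finset.mem_Icc] at hp
      obtain ⟨k, rfl⟩ : ∃ k, p = k + 1 := ⟨p - 1, by omega⟩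
      obtain ⟨hT0, hT1⟩ := T_bounds (k+1) (r+1) c hc
      have hT2 : ((c (k+1) : ℝ) * ((2:ℝ)^(k+1))⁻¹ + (-1:ℝ)^(c (k+1)) *
          ∑ q ∈ Icc (k+1+1) (r+1), ((2:ℝ)^q)⁻¹ * (c q : ℝ)) ^ 2 ≤
          (((2:ℝ)^(k+1))⁻¹)^2 := pow_le_pow_left₀ hT0 hT1 2
      calc l (i (k+1)) * 2 ^ (k+1-1) *
            ((c (k+1) : ℝ) * ((2:ℝ)^(k+1))⁻¹ + (-1:ℝ)^(c (k+1)) *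
              ∑ q ∈ Icc (k+1+1) (r+1), ((2:ℝ)^q)⁻¹ * (c q : ℝ)) ^ 2
          ≤ l (i (k+1)) * 2 ^ (k+1-1) * (((2:ℝ)^(k+1))⁻¹)^2 := by
            gcongr
            exact mul_nonneg (hpos _).le (by positivity)
        _ ≤ l (i (k+1)) / 2^(k+1) := by
            simp only [Nat.add_sub_cancel]
            have hl := (hpos (i (k+1))).le
            rw [div_eq_mul_inv]
            have h2 : (2:ℝ)^k * (((2:ℝ)^(k+1))⁻¹)^2 ≤ ((2:ℝ)^(k+1))⁻¹ := by
              have e1 : (2:ℝ)^k * (((2:ℝ)^(k+1))⁻¹)^2 = ((2:ℝ)^(k+2))⁻¹ := by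
                field_simp
                ring
              have e2 : ((2:ℝ)^(k+2))⁻¹ ≤ ((2:ℝ)^(k+1))⁻¹ :=
                inv_anti₀ (pow2_pos' (k+1))
                  (pow_le_pow_right₀ (by norm_num) (by omega))
              linarith
            calc l (i (k+1)) * 2^k * (((2:ℝ)^(k+1))⁻¹)^2
                = l (i (k+1)) * ((2:ℝ)^k * (((2:ℝ)^(k+1))⁻¹)^2) := by ring
              _ ≤ l (i (k+1)) * ((2:ℝ)^(k+1))⁻¹ := by gcongr
    calc ∑ p ∈ Icc 1 r, l (i p) * 2 ^ (p - 1) *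
          ((c p : ℝ) * ((2:ℝ)^p)⁻¹ + (-1:ℝ)^(c p) *
            ∑ q ∈ Icc (p+1) (r+1), ((2:ℝ)^q)⁻¹ * (c q : ℝ)) ^ 2
        ≤ ∑ p ∈ Icc 1 r, l (i p) / 2^p := Finset.sum_le_sum hterm
      _ = ∑ k ∈ range r, l (i (k+1)) / 2^(k+1) :=
          sum_Icc_one (fun p => l (i p) / 2^p) r
      _ ≤ ∑' k, l (i (k+1)) / 2^(k+1) :=
          Summable.sum_le_tsum (range r) (fun k _ => hf0 k) hsum
end

section
/- Let (λ_i) be nondecreasing positive reals and suppose ∑_{p=1}^∞ λ_{i_{p,j}}/2^p < ∞ for all j ∈ {1,...,d} (where i_{p,j} = 2^{p-1}(d+j-1)+1+∑_{q=0}^{p-1} c_q 2^{p-q-1} ranges over indices determined by dyadic digits). Then for every s ∈ [0,1] and j ∈ {1,...,d}, the series ∑_{i=1}^∞ λ_i ⟨S_i(s), e_j⟩² converges and is bounded by λ_j s² + (1/2)∑_{p=1}^∞ λ_{i_{p,j}}/2^p, uniformly in s. -/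
open MeasureTheory

noncomputable def haarFn (n : ℕ) (t : ℝ) : ℝ :=
  if n ≤ 1 then 1
  else
    let m : ℕ := Nat.log 2 (n - 1)
    let k : ℕ := n - 2 ^ m
    if ((k : ℝ) - 1) / 2 ^ m ≤ t ∧ t < (2 * (k : ℝ) - 1) / 2 ^ (m + 1) then
      (2 : ℝ) ^ ((m : ℝ) / 2)
    else if (2 * (k : ℝ) - 1) / 2 ^ (m + 1) ≤ t ∧ t < (k : ℝ) / 2 ^ m then
      -(2 : ℝ) ^ ((m : ℝ) / 2)
    else 0

noncomputable def schauderFn (n : ℕ) (s : ℝ) : ℝ :=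
  ∫ u in (0:ℝ)..s, haarFn n u

/-- `⟨S_i(s), e_v⟩` for the `d`-dimensional Schauder functions
`S_n(s) = ∫₀^s g_n(u) du` with `g_{d(r-1)+j} = H_r · e_j`
(components indexed by `v ∈ {1,…,d}`). -/
noncomputable def schauderComp (d i : ℕ) (s : ℝ) (v : ℕ) : ℝ :=
  if (i - 1) % d + 1 = v then schauderFn ((i - 1) / d + 1) s else 0

/-- The index `i_{p,j} = 2^{p-1}(d+j-1) + 1 + ∑_{q=0}^{p-1} c_q 2^{p-q-1}`
determined by dyadic digits `c`. -/
def dyadicIdx (d j : ℕ) (c : ℕ → ℕ) (p : ℕ) : ℕ :=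
  2 ^ (p - 1) * (d + j - 1) + 1 + ∑ q ∈ Finset.range p, c q * 2 ^ (p - q - 1)


open MeasureTheory Set

lemma integrable_ind (a b c : ℝ) :
    MeasureTheory.Integrable ((Set.Ico a b).indicator (fun _ => c)) volume := by
  rw [MeasureTheory.integrable_indicator_iff measurableSet_Ico]
  exact (integrableOn_const (by rw [Real.volume_Ico]; exact ENNReal.ofReal_ne_top))

lemma integral_ind_Ico (a b s : ℝ) (h0 : 0 ≤ a) (hab : a ≤ b) (hs : 0 ≤ s) :
    ∫ u in (0:ℝ)..s, (Set.Ico a b).indicator (fun _ => (1:ℝ)) u = min s b - min s a := by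
  have key : ∫ u in (0:ℝ)..s, (Set.Ico a b).indicator (fun _ => (1:ℝ)) u
      = ∫ u in (0:ℝ)..s, (Set.Ioc a b).indicator (fun _ => (1:ℝ)) u := by
    apply intervalIntegral.integral_congr_ae
    have h1 : (volume : Measure ℝ) {a} = 0 := Real.volume_singleton
    have h2 : (volume : Measure ℝ) {b} = 0 := Real.volume_singleton
    filter_upwards [measure_eq_zero_iff_ae_notMem.1 h1, measure_eq_zero_iff_ae_notMem.1 h2] with u hu1 hu2 _
    simp only [Set.mem_singleton_iff] at hu1 hu2
    have : u ∈ Set.Ico a b ↔ u ∈ Set.Ioc a b := by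
      simp only [Set.mem_Ico, Set.mem_Ioc]
      constructor
      · rintro ⟨x1, x2⟩; exact ⟨lt_of_le_of_ne x1 (Ne.symm hu1), le_of_lt x2⟩
      · rintro ⟨x1, x2⟩; exact ⟨le_of_lt x1, lt_of_le_of_ne x2 hu2⟩
    simp only [Set.indicator_apply, this]
  rw [key, intervalIntegral.integral_of_le hs,
    MeasureTheory.setIntegral_indicator measurableSet_Ioc, Set.Ioc_inter_Ioc,
    MeasureTheory.setIntegral_const, measureReal_def, Real.volume_Ioc, smul_eq_mul, mul_one]
  have ha : 0 ⊔ a = a := sup_eq_right.2 h0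
  rw [ha]
  rcases le_total s a with h | h
  · rw [min_eq_left (h.trans hab), min_eq_left h]
    rw [show ENNReal.ofReal (s - a) = 0 from ENNReal.ofReal_eq_zero.2 (by linarith)]
    simp
  · rcases le_total s b with h2 | h2
    · rw [min_eq_left h2, min_eq_right h, ENNReal.toReal_ofReal (by linarith)]
    · rw [min_eq_right h2, min_eq_right (hab.trans h2), ENNReal.toReal_ofReal (by linarith)]

lemma haarFn_form (m k : ℕ) (hk : k < 2^m) (u : ℝ) :
    haarFn (2^m + k + 1) u =
      (Set.Ico ((k:ℝ)/2^m) ((2*(k:ℝ)+1)/2^(m+1))).indicator (fun _ => (2:ℝ)^((m:ℝ)/2)) u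
      - (Set.Ico ((2*(k:ℝ)+1)/2^(m+1)) (((k:ℝ)+1)/2^m)).indicator (fun _ => (2:ℝ)^((m:ℝ)/2)) u := by
  have h1 : 2^m + k + 1 - 1 = 2^m + k := by omega
  have hlog : Nat.log 2 (2^m + k) = m :=
    Nat.log_eq_of_pow_le_of_lt_pow (by omega) (by rw [pow_succ]; omega)
  have hn1 : ¬ (2^m + k + 1 ≤ 1) := by have := Nat.two_pow_pos m; omega
  rw [haarFn]
  simp only [h1, hlog, if_neg hn1]
  have h2 : 2^m + k + 1 - 2^m = k + 1 := by omega
  rw [h2]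
  have c1 : ((k+1 : ℕ) : ℝ) - 1 = (k:ℝ) := by push_cast; ring
  have c2 : 2 * ((k+1 : ℕ) : ℝ) - 1 = 2*(k:ℝ)+1 := by push_cast; ring
  rw [c1, c2]
  set A := (k:ℝ)/2^m
  set B := (2*(k:ℝ)+1)/2^(m+1)
  set C := ((k:ℝ)+1)/2^m
  have hc : ((k+1:ℕ):ℝ) = (k:ℝ)+1 := by push_cast; ring
  rw [hc]
  by_cases hAB : u ∈ Set.Ico A B
  · rw [if_pos ⟨hAB.1, hAB.2⟩, Set.indicator_of_mem hAB,
      Set.indicator_of_notMem (by simp only [Set.mem_Ico, not_and_or, not_le]; exact Or.inl hAB.2)]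
    ring
  · rw [if_neg (by simpa [Set.mem_Ico] using hAB), Set.indicator_of_notMem hAB]
    by_cases hBC : u ∈ Set.Ico B C
    · rw [if_pos ⟨hBC.1, hBC.2⟩, Set.indicator_of_mem hBC]; ring
    · rw [if_neg (by simpa [Set.mem_Ico] using hBC), Set.indicator_of_notMem hBC]; ring

lemma ind_mul (a b h u : ℝ) : (Set.Ico a b).indicator (fun _ => h) u
    = h * (Set.Ico a b).indicator (fun _ => (1:ℝ)) u := by
  by_cases hu : u ∈ Set.Ico a b <;> simp [hu]

lemma schauderFn_form (m k : ℕ) (hk : k < 2^m) (s : ℝ) (hs : 0 ≤ s) :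
    schauderFn (2^m + k + 1) s =
      (2:ℝ)^((m:ℝ)/2) * ((min s ((2*(k:ℝ)+1)/2^(m+1)) - min s ((k:ℝ)/2^m)) -
        (min s (((k:ℝ)+1)/2^m) - min s ((2*(k:ℝ)+1)/2^(m+1)))) := by
  have hm0 : (0:ℝ) < 2^m := by positivity
  have hm1 : (0:ℝ) < 2^(m+1) := by positivity
  have hA : (0:ℝ) ≤ (k:ℝ)/2^m := by positivity
  have hAB : (k:ℝ)/2^m ≤ (2*(k:ℝ)+1)/2^(m+1) := by
    rw [div_le_div_iff₀ hm0 hm1, pow_succ]; push_cast; nlinarith [pow_pos (show (0:ℝ)<2 by norm_num) m]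
  have hB : (0:ℝ) ≤ (2*(k:ℝ)+1)/2^(m+1) := by positivity
  have hBC : (2*(k:ℝ)+1)/2^(m+1) ≤ ((k:ℝ)+1)/2^m := by
    rw [div_le_div_iff₀ hm1 hm0, pow_succ]; push_cast; nlinarith [pow_pos (show (0:ℝ)<2 by norm_num) m]
  rw [schauderFn]
  simp only [haarFn_form m k hk]
  rw [intervalIntegral.integral_sub ((integrable_ind _ _ _).intervalIntegrable)
    ((integrable_ind _ _ _).intervalIntegrable)]
  simp only [fun a b => ind_mul a b ((2:ℝ)^((m:ℝ)/2))]
  rw [intervalIntegral.integral_const_mul, intervalIntegral.integral_const_mul,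
    integral_ind_Ico _ _ _ hA hAB hs, integral_ind_Ico _ _ _ hB hBC hs]
  ring

lemma Bval (m k : ℕ) : (2*(k:ℝ)+1)/2^(m+1) = ((k:ℝ) + 1/2)/2^m := by
  rw [pow_succ]; field_simp

lemma schauderFn_sq_le (m k : ℕ) (hk : k < 2^m) (s : ℝ) (hs : 0 ≤ s) :
    (schauderFn (2^m+k+1) s)^2 ≤ (min (2^m*s - k) (1 - (2^m*s - k)))^2 / 2^m := by
  have hp : (0:ℝ) < 2^m := by positivity
  have hsq : ((2:ℝ)^((m:ℝ)/2))^2 = (2:ℝ)^m := by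
    rw [← Real.rpow_natCast ((2:ℝ)^((m:ℝ)/2)) 2, ← Real.rpow_mul (by norm_num)]
    norm_num
  have hAB : (k:ℝ)/2^m ≤ ((k:ℝ)+1/2)/2^m := by
    rw [div_le_div_iff₀ hp hp]; nlinarith
  have hBC : ((k:ℝ)+1/2)/2^m ≤ ((k:ℝ)+1)/2^m := by
    rw [div_le_div_iff₀ hp hp]; nlinarith
  rw [schauderFn_form m k hk s hs, mul_pow, hsq, Bval]
  set w := 2^m*s - (k:ℝ) with hw
  rcases le_total s (((k:ℝ)+1/2)/2^m) with h1 | h1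
  · have e1 : min s (((k:ℝ)+1/2)/2^m) = s := min_eq_left h1
    have e3 : min s (((k:ℝ)+1)/2^m) = s := min_eq_left (h1.trans hBC)
    rcases le_total s ((k:ℝ)/2^m) with h2 | h2
    · have e2 : min s ((k:ℝ)/2^m) = s := min_eq_left h2
      rw [e1, e2, e3]
      have hz : (2:ℝ)^m * (s - s - (s - s))^2 = 0 := by ring
      rw [hz]; positivity
    · have e2 : min s ((k:ℝ)/2^m) = (k:ℝ)/2^m := min_eq_right h2
      have hwle : w ≤ 1/2 := by
        have := (le_div_iff₀ hp).1 h1; rw [hw]; nlinarith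
      rw [e1, e2, e3, min_eq_left (by linarith : w ≤ 1 - w)]
      apply le_of_eq
      rw [hw]
      field_simp
      ring
  · have e1 : min s (((k:ℝ)+1/2)/2^m) = ((k:ℝ)+1/2)/2^m := min_eq_right h1
    have e2 : min s ((k:ℝ)/2^m) = (k:ℝ)/2^m := min_eq_right (hAB.trans h1)
    have hwge : 1/2 ≤ w := by
      have := (div_le_iff₀ hp).1 h1; rw [hw]; nlinarith
    rw [e1, e2, min_eq_right (by linarith : 1 - w ≤ w)]
    rcases le_total s (((k:ℝ)+1)/2^m) with h3 | h3
    · rw [min_eq_left h3]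
      apply le_of_eq
      rw [hw]
      field_simp
      ring
    · rw [min_eq_right h3]
      have hz : (2:ℝ)^m * (((k:ℝ)+1/2)/2^m - (k:ℝ)/2^m - (((k:ℝ)+1)/2^m - ((k:ℝ)+1/2)/2^m))^2 = 0 := by
        field_simp
        ring
      rw [hz]; positivity

lemma schauderFn_vanish (m k : ℕ) (hk : k < 2^m) (s : ℝ) (hs : 0 ≤ s)
    (h : s ≤ (k:ℝ)/2^m ∨ ((k:ℝ)+1)/2^m ≤ s) : schauderFn (2^m+k+1) s = 0 := by
  have hp : (0:ℝ) < 2^m := by positivity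
  have hAB : (k:ℝ)/2^m ≤ ((k:ℝ)+1/2)/2^m := by
    rw [div_le_div_iff₀ hp hp]; nlinarith
  have hBC : ((k:ℝ)+1/2)/2^m ≤ ((k:ℝ)+1)/2^m := by
    rw [div_le_div_iff₀ hp hp]; nlinarith
  rw [schauderFn_form m k hk s hs, Bval]
  rcases h with h | h
  · rw [min_eq_left (h.trans hAB), min_eq_left h, min_eq_left ((h.trans hAB).trans hBC)]
    ring
  · rw [min_eq_right (hBC.trans h), min_eq_right ((hAB.trans hBC).trans h), min_eq_right h]
    field_simp
    ring

lemma schauderFn_one (s : ℝ) : schauderFn 1 s = s := by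
  have h : (fun u : ℝ => haarFn 1 u) = fun _ => (1:ℝ) := by
    funext u; simp [haarFn]
  rw [schauderFn, h, intervalIntegral.integral_const]
  simp

noncomputable def Kf (s : ℝ) (m : ℕ) : ℕ := ⌊(2:ℝ)^m * s⌋₊
noncomputable def wf (s : ℝ) (m : ℕ) : ℝ := 2^m * s - Kf s m
noncomputable def Df (s : ℝ) (m : ℕ) : ℝ := wf s m * (1 - wf s m) / 2^m

lemma wf_nonneg (s : ℝ) (hs : 0 ≤ s) (m : ℕ) : 0 ≤ wf s m := by
  rw [wf, Kf, sub_nonneg]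
  exact Nat.floor_le (by positivity)

lemma wf_lt_one (s : ℝ) (m : ℕ) : wf s m < 1 := by
  rw [wf, Kf]
  have := Nat.lt_floor_add_one ((2:ℝ)^m * s)
  linarith

lemma Kf_le (s : ℝ) (hs1 : s ≤ 1) (m : ℕ) : Kf s m ≤ 2^m := by
  rw [Kf]
  have h : (2:ℝ)^m * s ≤ ((2^m : ℕ) : ℝ) := by
    push_cast
    nlinarith [pow_pos (show (0:ℝ) < 2 by norm_num) m]
  calc ⌊(2:ℝ)^m * s⌋₊ ≤ ⌊((2^m : ℕ) : ℝ)⌋₊ := Nat.floor_le_floor h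
    _ = 2^m := Nat.floor_natCast _

lemma Kf_succ (s : ℝ) (hs : 0 ≤ s) (m : ℕ) :
    2 * Kf s m ≤ Kf s (m+1) ∧ Kf s (m+1) ≤ 2 * Kf s m + 1 := by
  have h1 : ((⌊(2:ℝ)^m * s⌋₊ : ℕ) : ℝ) ≤ 2^m * s := Nat.floor_le (by positivity)
  have h2 : (2:ℝ)^m * s < (⌊(2:ℝ)^m * s⌋₊ : ℝ) + 1 := Nat.lt_floor_add_one _
  constructor
  · simp only [Kf]
    apply Nat.le_floor
    push_cast
    rw [pow_succ]
    nlinarith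
  · have h3 : Kf s (m+1) < 2 * Kf s m + 2 := by
      simp only [Kf]; rw [Nat.floor_lt (by positivity)]
      push_cast
      rw [pow_succ]
      nlinarith
    omega

lemma wf_succ (s : ℝ) (hs : 0 ≤ s) (m : ℕ) :
    wf s (m+1) = 2 * wf s m - ((Kf s (m+1) - 2 * Kf s m : ℕ) : ℝ) := by
  rw [wf, wf, Nat.cast_sub (Kf_succ s hs m).1]
  push_cast
  rw [pow_succ]
  ring

lemma Df_diff (s : ℝ) (hs : 0 ≤ s) (m : ℕ) :
    Df s m - Df s (m+1) = (min (wf s m) (1 - wf s m))^2 / 2^m := by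
  have hb : Kf s (m+1) - 2 * Kf s m = 0 ∨ Kf s (m+1) - 2 * Kf s m = 1 := by
    have := Kf_succ s hs m; omega
  have hp : (0:ℝ) < 2^m := by positivity
  rcases hb with hb | hb
  · have hrec : wf s (m+1) = 2 * wf s m := by rw [wf_succ s hs m, hb]; push_cast; ring
    have hlt : wf s m < 1/2 := by
      have h := wf_lt_one s (m+1); rw [hrec] at h; linarith
    rw [min_eq_left (by linarith : wf s m ≤ 1 - wf s m)]
    rw [Df, Df, hrec, pow_succ]
    field_simp
    ring
  · have hrec : wf s (m+1) = 2 * wf s m - 1 := by rw [wf_succ s hs m, hb]; push_cast; ring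
    have hge : 1/2 ≤ wf s m := by
      have h := wf_nonneg s hs (m+1); rw [hrec] at h; linarith
    rw [min_eq_right (by linarith : 1 - wf s m ≤ wf s m)]
    rw [Df, Df, hrec, pow_succ]
    field_simp
    ring

lemma Df_nonneg (s : ℝ) (hs : 0 ≤ s) (m : ℕ) : 0 ≤ Df s m := by
  rw [Df]
  apply div_nonneg _ (by positivity)
  nlinarith [wf_nonneg s hs m, wf_lt_one s m]

lemma Df_le (s : ℝ) (hs : 0 ≤ s) (m : ℕ) : Df s m ≤ 1/2^(m+2) := by
  rw [Df, div_le_div_iff₀ (by positivity) (by positivity)]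
  have e : (2:ℝ)^(m+2) = 2^m * 4 := by rw [pow_succ, pow_succ]; ring
  rw [e]
  nlinarith [sq_nonneg (2 * wf s m - 1), pow_pos (show (0:ℝ) < 2 by norm_num) m]

lemma geo_sum (p : ℕ) : ∑ i ∈ Finset.range p, 2^i = 2^p - 1 := by
  induction p with
  | zero => rfl
  | succ n ih =>
    rw [Finset.sum_range_succ, ih, pow_succ]
    have := Nat.one_le_two_pow (n := n)
    omega

lemma dyadicIdx_ones (d j : ℕ) (hd : 1 ≤ d) (p : ℕ) :
    dyadicIdx d j (fun q => if q = 0 then 0 else 1) (p+1) = 2^p * (d+j) := by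
  unfold dyadicIdx
  have hsum : ∑ q ∈ Finset.range (p+1), (if q = 0 then 0 else 1) * 2^(p+1-q-1) = 2^p - 1 := by
    rw [Finset.sum_range_succ']
    norm_num
    have h : ∀ i ∈ Finset.range p, (2:ℕ)^(p+1-(i+1)-1) = 2^(p-1-i) := by
      intro i hi; congr 1; omega
    rw [Finset.sum_congr rfl h, Finset.sum_range_reflect (fun i => 2^i) p, geo_sum]
  rw [hsum]
  have h1 : p + 1 - 1 = p := rfl
  rw [h1]
  have h2 : 2^p * (d+j) = 2^p * (d+j-1) + 2^p := by
    rw [← Nat.mul_succ]; congr 1; omega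
  have := Nat.one_le_two_pow (n := p)
  omega

/-- If `∑_p λ_{i_{p,j}}/2^p` is bounded by `M j` over all dyadic digit sequences,
then for every `s ∈ [0,1]` and `j ∈ {1,…,d}` the series
`∑_i λ_i ⟨S_i(s), e_j⟩²` converges and is bounded by
`λ_j s² + (1/2)·M j`, uniformly in `s`. -/
theorem sum_lambda_schauder_sq_bounded (d : ℕ) (hd : 1 ≤ d)
    (l : ℕ → ℝ) (hpos : ∀ n, 0 < l n) (hmono : Monotone l) (M : ℕ → ℝ)
    (hM : ∀ j, 1 ≤ j → j ≤ d → ∀ c : ℕ → ℕ, (∀ q, c q ≤ 1) → c 0 = 0 →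
      Summable (fun p : ℕ => l (dyadicIdx d j c (p + 1)) / 2 ^ (p + 1)) ∧
      (∑' p : ℕ, l (dyadicIdx d j c (p + 1)) / 2 ^ (p + 1)) ≤ M j) :
    ∀ s ∈ Set.Icc (0:ℝ) 1, ∀ j, 1 ≤ j → j ≤ d →
      Summable (fun i : ℕ => l (i + 1) * (schauderComp d (i + 1) s j) ^ 2) ∧
      (∑' i : ℕ, l (i + 1) * (schauderComp d (i + 1) s j) ^ 2) ≤
        l j * s ^ 2 + (1 / 2) * M j := by
  intro s hs j hj1 hjd
  obtain ⟨hs0, hs1⟩ := hs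
  have hd0 : 0 < d := hd
  obtain ⟨hSum0, hTsum0⟩ := hM j hj1 hjd (fun q => if q = 0 then 0 else 1)
    (fun q => by by_cases h : q = 0 <;> simp [h]) (by simp)
  set γ : ℕ → ℝ := fun p => l (2^p * (d+j)) with hγdef
  have hefun : (fun p : ℕ => l (dyadicIdx d j (fun q => if q = 0 then 0 else 1) (p+1)) / 2^(p+1))
      = fun p : ℕ => γ p / 2^(p+1) := funext fun p => by rw [dyadicIdx_ones d j hd p]
  rw [hefun] at hSum0 hTsum0
  have hγ0 : ∀ p, 0 ≤ γ p := fun p => (hpos _).le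
  have hγmono : ∀ p q : ℕ, p ≤ q → γ p ≤ γ q := by
    intro p q hpq
    exact hmono (Nat.mul_le_mul_right _ (Nat.pow_le_pow_right (by norm_num) hpq))
  set f : ℕ → ℝ := fun i => l (i+1) * (schauderComp d (i+1) s j)^2 with hfdef
  have hfnn : ∀ i, 0 ≤ f i := fun i => mul_nonneg (hpos _).le (sq_nonneg _)
  set θ : ℕ → ℕ := fun m => d * (2^m + Kf s m) + (j - 1) with hθdef
  -- value of f at θ m
  have hcomp : ∀ m, f (θ m) = l (d * (2^m + Kf s m) + j) * (schauderFn (2^m + Kf s m + 1) s)^2 := by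
    intro m
    have hθv : θ m + 1 = d * (2^m + Kf s m) + j := by simp only [hθdef]; omega
    simp only [hfdef, hθv]
    congr 2
    rw [schauderComp]
    have h1 : d * (2^m + Kf s m) + j - 1 = d * (2^m + Kf s m) + (j-1) := by omega
    have hmod : (d * (2^m + Kf s m) + j - 1) % d = j - 1 := by
      rw [h1, Nat.mul_add_mod, Nat.mod_eq_of_lt (by omega)]
    have hdiv : (d * (2^m + Kf s m) + j - 1) / d = 2^m + Kf s m := by
      rw [h1, Nat.mul_add_div hd0, Nat.div_eq_of_lt (by omega)]
      omega
    rw [hmod, hdiv, if_pos (by omega)]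
  -- bound for f at θ m
  have hbound : ∀ m, f (θ m) ≤ γ (m+1) * (Df s m - Df s (m+1)) := by
    intro m
    rw [hcomp m]
    rcases lt_or_ge (Kf s m) (2^m) with hKm | hKm
    · have hsch := schauderFn_sq_le m (Kf s m) hKm s hs0
      have hidx : d * (2^m + Kf s m) + j ≤ 2^(m+1) * (d+j) := by
        have e : (2:ℕ)^(m+1) = 2^m + 2^m := by rw [pow_succ]; ring
        have hj2 : j ≤ 2^(m+1) * j := Nat.le_mul_of_pos_left j (by positivity)
        calc d * (2^m + Kf s m) + j ≤ d * (2^m + 2^m) + j := by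
              have : 2^m + Kf s m ≤ 2^m + 2^m := by omega
              exact Nat.add_le_add_right (Nat.mul_le_mul_left d this) j
          _ = 2^(m+1) * d + j := by rw [e]; ring
          _ ≤ 2^(m+1) * d + 2^(m+1) * j := Nat.add_le_add_left hj2 _
          _ = 2^(m+1) * (d+j) := by ring
      have hl : l (d * (2^m + Kf s m) + j) ≤ γ (m+1) := hmono hidx
      calc l (d * (2^m + Kf s m) + j) * (schauderFn (2^m + Kf s m + 1) s)^2
          ≤ γ (m+1) * ((min (2^m*s - Kf s m) (1 - (2^m*s - Kf s m)))^2 / 2^m) :=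
            mul_le_mul hl hsch (sq_nonneg _) (hγ0 _)
        _ = γ (m+1) * (Df s m - Df s (m+1)) := by
            rw [Df_diff s hs0 m]; rfl
    · have hKe : Kf s m = 2^m := le_antisymm (Kf_le s hs1 m) hKm
      have hs1' : 1 ≤ s := by
        by_contra hc
        push_neg at hc
        have : Kf s m < 2^m := by
          rw [Kf, Nat.floor_lt (by positivity)]
          push_cast
          nlinarith [pow_pos (show (0:ℝ) < 2 by norm_num) m]
        omega
      have hz : schauderFn (2^m + Kf s m + 1) s = 0 := by
        have he : 2^m + Kf s m + 1 = 2^(m+1) + 0 + 1 := by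
          rw [hKe, pow_succ]; ring
        rw [he]
        apply schauderFn_vanish (m+1) 0 (by positivity) s hs0
        right
        have : (0:ℝ) < 2^(m+1) := by positivity
        rw [div_le_iff₀ this]
        push_cast
        have h2 : (1:ℝ) ≤ 2^(m+1) := by
          calc (1:ℝ) = 1^(m+1) := (one_pow _).symm
            _ ≤ 2^(m+1) := by gcongr <;> norm_num
        nlinarith [hs1', h2]
      rw [hz]
      have := Df_diff s hs0 m
      nlinarith [hγ0 (m+1), sq_nonneg (min (wf s m) (1 - wf s m)),
        pow_pos (show (0:ℝ) < 2 by norm_num) m,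
        div_nonneg (sq_nonneg (min (wf s m) (1 - wf s m))) (le_of_lt (pow_pos (show (0:ℝ) < 2 by norm_num) m))]
  -- support characterization
  have hsupp : ∀ i, f i ≠ 0 → i = j - 1 ∨ ∃ m, i = θ m := by
    intro i hfi
    have hcomp0 : schauderComp d (i+1) s j ≠ 0 := by
      intro h; apply hfi; simp [hfdef, h]
    rw [schauderComp] at hcomp0
    simp only [Nat.add_sub_cancel] at hcomp0
    by_cases hcond : i % d + 1 = j
    swap
    · rw [if_neg hcond] at hcomp0; exact absurd rfl hcomp0
    rw [if_pos hcond] at hcomp0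
    have hi : i = d * (i / d) + (j - 1) := by
      have := Nat.div_add_mod i d; omega
    rcases Nat.eq_zero_or_pos (i / d) with ht | ht
    · left; rw [ht, Nat.mul_zero] at hi; omega
    · right
      set t := i / d with htdef
      have h1 : 2^(Nat.log 2 t) ≤ t := Nat.pow_log_le_self 2 (by omega)
      have h2 : t < 2^(Nat.log 2 t + 1) := Nat.lt_pow_succ_log_self (by norm_num) t
      set m := Nat.log 2 t with hmdef
      have hkm : t - 2^m < 2^m := by
        have e : (2:ℕ)^(m+1) = 2^m + 2^m := by rw [pow_succ]; ring
        omega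
      have hteq : t + 1 = 2^m + (t - 2^m) + 1 := by omega
      rw [hteq] at hcomp0
      have hp : (0:ℝ) < 2^m := by positivity
      have hA : ((t - 2^m : ℕ):ℝ)/2^m < s := by
        by_contra hc
        push_neg at hc
        exact hcomp0 (schauderFn_vanish m (t - 2^m) hkm s hs0 (Or.inl hc))
      have hC : s < (((t - 2^m : ℕ):ℝ)+1)/2^m := by
        by_contra hc
        push_neg at hc
        exact hcomp0 (schauderFn_vanish m (t - 2^m) hkm s hs0 (Or.inr hc))
      have hKm : Kf s m = t - 2^m := by
        rw [Kf]
        rw [Nat.floor_eq_iff (by positivity)]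
        constructor
        · rw [div_lt_iff₀ hp] at hA; linarith
        · rw [lt_div_iff₀ hp] at hC; linarith
      exact ⟨m, by rw [hi, hθdef]; simp only; rw [hKm, show 2^m + (t - 2^m) = t from by omega]⟩
  -- θ is injective
  have hvmono : StrictMono (fun m => 2^m + Kf s m) := by
    apply strictMono_nat_of_lt_succ
    intro m
    have h1 := (Kf_succ s hs0 m).1
    have h2 : (2:ℕ)^m < 2^(m+1) := by
      have e : (2:ℕ)^(m+1) = 2^m + 2^m := by rw [pow_succ]; ring
      have := Nat.one_le_two_pow (n := m)
      omega
    show 2^m + Kf s m < 2^(m+1) + Kf s (m+1)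
    omega
  have hθinj : Function.Injective θ := by
    intro a b hab
    simp only [hθdef] at hab
    have h1 : d * (2^a + Kf s a) = d * (2^b + Kf s b) := by omega
    exact hvmono.injective (Nat.eq_of_mul_eq_mul_left hd0 h1)
  -- Abel-type invariant
  have inv : ∀ N, ∑ m ∈ Finset.range N, γ (m+1) * (Df s m - Df s (m+1))
      ≤ (1/4) * ∑ p ∈ Finset.range N, γ p / 2^p + γ N * (1/2^(N+1) - Df s N) := by
    intro N
    induction N with
    | zero =>
      simp only [Finset.range_zero, Finset.sum_empty, mul_zero, zero_add]
      have h1 := Df_le s hs0 0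
      norm_num at h1 ⊢
      apply mul_nonneg (hγ0 0)
      linarith
    | succ n ih =>
      rw [Finset.sum_range_succ, Finset.sum_range_succ]
      have key : (γ (n+1) - γ n) * Df s n ≤ (γ (n+1) - γ n) * (1/2^(n+2)) :=
        mul_le_mul_of_nonneg_left (Df_le s hs0 n) (sub_nonneg.2 (hγmono n (n+1) (Nat.le_succ n)))
      have e2 : (1/4) * (γ n / 2^n) = γ n * (1/2^(n+2)) := by
        rw [pow_succ, pow_succ]; ring
      have e3 : γ n * (1/2^(n+1)) = 2 * (γ n * (1/2^(n+2))) := by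
        rw [pow_succ (2:ℝ) (n+1)]; ring
      nlinarith [ih, key, e2, e3]
  -- tail bound
  have htail : ∀ N, ∑ p ∈ Finset.range N, γ p / 2^(p+1) + γ N/2^N ≤ ∑' p, γ p/2^(p+1) := by
    intro N
    have hshift : Summable (fun i : ℕ => γ (i+N)/2^(i+N+1)) :=
      (summable_nat_add_iff (f := fun p => γ p / 2^(p+1)) N).2 hSum0
    have hgeo : Summable (fun i : ℕ => γ N/2^(N+1) * (1/2)^i) :=
      (summable_geometric_two).mul_left _
    have heq : ∀ i : ℕ, γ N/2^(N+1) * (1/2)^i = γ N/2^(i+N+1) := by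
      intro i
      rw [div_pow, one_pow, div_mul_div_comm, mul_one]
      ring
    have hlow : γ N/2^N ≤ ∑' i : ℕ, γ (i+N)/2^(i+N+1) := by
      have h1 : ∑' i : ℕ, (γ N/2^(N+1) * (1/2)^i) = γ N/2^N := by
        rw [tsum_mul_left, tsum_geometric_two, pow_succ]
        ring
      rw [← h1]
      apply Summable.tsum_le_tsum _ hgeo hshift
      intro i
      rw [heq i]
      gcongr
      exact hγmono N (i+N) (by omega)
    have hdecomp := hSum0.sum_add_tsum_nat_add (f := fun p => γ p/2^(p+1)) N
    linarith [hlow]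
  -- value at j-1
  have hf0 : f (j-1) = l j * s^2 := by
    simp only [hfdef]
    rw [show j - 1 + 1 = j from by omega, schauderComp,
      Nat.mod_eq_of_lt (show j-1 < d from by omega), if_pos (by omega),
      Nat.div_eq_of_lt (show j-1 < d from by omega), schauderFn_one]
  -- the main estimate for partial sums
  have key : ∀ N, ∑ i ∈ Finset.range N, f i ≤ l j * s^2 + (1/2) * M j := by
    intro N
    have hsub : (Finset.range N).filter (fun i => f i ≠ 0) ⊆
        insert (j-1) ((Finset.range N).image θ) := by
      intro i hi
      rw [Finset.mem_filter, Finset.mem_range] at hi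
      obtain ⟨hiN, hfi⟩ := hi
      rcases hsupp i hfi with h | ⟨m, hm⟩
      · rw [h]; exact Finset.mem_insert_self _ _
      · apply Finset.mem_insert_of_mem
        rw [Finset.mem_image]
        refine ⟨m, Finset.mem_range.2 ?_, hm.symm⟩
        have h2 : m < 2^m := Nat.lt_two_pow_self
        have h3 : 2^m ≤ d * (2^m + Kf s m) :=
          le_trans (Nat.le_add_right _ _) (Nat.le_mul_of_pos_left _ hd0)
        have h4 : m < θ m := by simp only [hθdef]; omega
        omega
    have hnm : (j-1) ∉ (Finset.range N).image θ := by
      rw [Finset.mem_image]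
      rintro ⟨m, _, hm⟩
      have h1 : 1 ≤ 2^m + Kf s m := le_trans Nat.one_le_two_pow (Nat.le_add_right _ _)
      have h2 : d ≤ d * (2^m + Kf s m) := Nat.le_mul_of_pos_right d h1
      simp only [hθdef] at hm
      omega
    have hchain : ∑ i ∈ Finset.range N, f i
        ≤ f (j-1) + ∑ m ∈ Finset.range N, γ (m+1) * (Df s m - Df s (m+1)) := by
      calc ∑ i ∈ Finset.range N, f i
          = ∑ i ∈ (Finset.range N).filter (fun i => f i ≠ 0), f i :=
            (Finset.sum_filter_ne_zero _).symm
        _ ≤ ∑ i ∈ insert (j-1) ((Finset.range N).image θ), f i :=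
            Finset.sum_le_sum_of_subset_of_nonneg hsub (fun i _ _ => hfnn i)
        _ = f (j-1) + ∑ i ∈ (Finset.range N).image θ, f i := Finset.sum_insert hnm
        _ = f (j-1) + ∑ m ∈ Finset.range N, f (θ m) := by
            rw [Finset.sum_image (fun a _ b _ h => hθinj h)]
        _ ≤ f (j-1) + ∑ m ∈ Finset.range N, γ (m+1) * (Df s m - Df s (m+1)) :=
            add_le_add_right (Finset.sum_le_sum (fun m _ => hbound m)) _
    have halg : (1/4) * ∑ p ∈ Finset.range N, γ p / 2^p
        = (1/2) * ∑ p ∈ Finset.range N, γ p / 2^(p+1) := by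
      rw [Finset.mul_sum, Finset.mul_sum]
      apply Finset.sum_congr rfl
      intro p _
      rw [pow_succ]
      ring
    have hlast : γ N * (1/2^(N+1) - Df s N) ≤ (1/2) * (γ N/2^N) := by
      have h1 : 0 ≤ γ N * Df s N := mul_nonneg (hγ0 N) (Df_nonneg s hs0 N)
      have h2 : γ N * (1/2^(N+1)) = (1/2) * (γ N/2^N) := by
        rw [pow_succ]; ring
      nlinarith
    have := inv N
    have := htail N
    rw [hf0] at hchain
    rw [halg] at *
    linarith [hTsum0]
  exact ⟨summable_of_sum_range_le hfnn key, Real.tsum_le_of_sum_range_le hfnn key⟩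
end
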